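/- Let G = NK be a finite group where N = L₁ × ⋯ × L_t is a normal subgroup with each L_i a nonabelian simple group, K is a subgroup not containing N, K permutes the factors L_i transitively by conjugation, and K₁ = L₁ ∩ K is nontrivial. Then the map sending T to L₁ ∩ T is a bijection from the set of maximal K-invariant subgroups of N containing N ∩ K to the set of maximal N_K(L₁)-invariant subgroups of L₁ containing K₁. -/

import Mathlib

section stmt6aux

variable {G : Type*} [Group G]

private lemma conj_mem_map_iff (k x : G) (A : Subgroup G) :
    x ∈ A.map (MulAut.conj k).toMonoidHom ↔ k⁻¹ * x * k ∈ A := by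
  rw [Subgroup.mem_map_equiv]
  simp [MulAut.conj_symm_apply]

private lemma mem_map_conj_of_mem (k x : G) (A : Subgroup G) (hx : x ∈ A) :
    k * x * k⁻¹ ∈ A.map (MulAut.conj k).toMonoidHom := by
  rw [conj_mem_map_iff]
  group
  simpa using hx

private lemma map_conj_mul (k k' : G) (A : Subgroup G) :
    (A.map (MulAut.conj k').toMonoidHom).map (MulAut.conj k).toMonoidHom
      = A.map (MulAut.conj (k * k')).toMonoidHom := by
  ext x
  simp only [conj_mem_map_iff, mul_inv_rev, mul_assoc]

private lemma map_conj_one (A : Subgroup G) : A.map (MulAut.conj (1:G)).toMonoidHom = A := by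
  ext x
  simp [conj_mem_map_iff]

private lemma map_conj_cancel (k : G) (A B : Subgroup G)
    (h : A.map (MulAut.conj k).toMonoidHom = B.map (MulAut.conj k).toMonoidHom) : A = B := by
  have h2 := congrArg (Subgroup.map (MulAut.conj k⁻¹).toMonoidHom) h
  rwa [map_conj_mul, map_conj_mul, inv_mul_cancel, map_conj_one, map_conj_one] at h2

private lemma map_conj_inf (k : G) (A B : Subgroup G) :
    (A ⊓ B).map (MulAut.conj k).toMonoidHom
      = A.map (MulAut.conj k).toMonoidHom ⊓ B.map (MulAut.conj k).toMonoidHom := by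
  ext x
  simp only [Subgroup.mem_inf, conj_mem_map_iff]

/-- Decomposition of elements of a join of "sub-factors" of an internal direct product. -/
private lemma decomp_main {t : ℕ} (L : Fin t → Subgroup G)
    (hcommute : ∀ i j : Fin t, i ≠ j → ∀ x ∈ L i, ∀ y ∈ L j, x * y = y * x)
    (D : Fin t → Subgroup G) (hD : ∀ i, D i ≤ L i) {x : G} (hx : x ∈ ⨆ i, D i) :
    ∃ a : Fin t → G, (∀ i, a i ∈ D i) ∧
      (∀ i, (a i)⁻¹ * x ∈ ⨆ j, ⨆ _ : j ≠ i, L j) ∧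
      ∀ E : Fin t → Subgroup G, (∀ i, a i ∈ E i) → x ∈ ⨆ i, E i := by
  classical
  let P : G → Prop := fun y => ∃ (a : Fin t → G) (_ : ∀ i, a i ∈ D i)
      (hc : ((Finset.univ : Finset (Fin t)) : Set (Fin t)).Pairwise (Function.onFun Commute a)),
      y = Finset.univ.noncommProd a hc
  have hpair : ∀ (a b : Fin t → G), (∀ i, a i ∈ L i) → (∀ i, b i ∈ L i) →
      ((Finset.univ : Finset (Fin t)) : Set (Fin t)).Pairwise fun i j => Commute (a i) (b j) :=
    fun a b ha hb i _ j _ hij => hcommute i j hij _ (ha i) _ (hb j)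
  have hone : P 1 := by
    refine ⟨fun _ => 1, fun i => one_mem _, fun i _ j _ _ => Commute.one_left 1, ?_⟩
    exact ((Finset.noncommProd_eq_pow_card _ _ _ 1 (fun _ _ => rfl)).trans (one_pow _)).symm
  have hmul : ∀ y z, P y → P z → P (y * z) := by
    rintro _ _ ⟨a, ha, hca, rfl⟩ ⟨b, hb, hcb, rfl⟩
    have haL : ∀ i, a i ∈ L i := fun i => hD i (ha i)
    have hbL : ∀ i, b i ∈ L i := fun i => hD i (hb i)
    refine ⟨a * b, fun i => mul_mem (ha i) (hb i),
      Finset.noncommProd_mul_distrib_aux hca hcb (hpair b a hbL haL), ?_⟩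
    rw [Finset.noncommProd_mul_distrib a b hca hcb (hpair b a hbL haL)]
  have hinv : ∀ y, P y → P y⁻¹ := by
    rintro _ ⟨a, ha, hca, rfl⟩
    have haL : ∀ i, a i ∈ L i := fun i => hD i (ha i)
    have hainvL : ∀ i, (a i)⁻¹ ∈ L i := fun i => inv_mem (haL i)
    have hcinv : ((Finset.univ : Finset (Fin t)) : Set (Fin t)).Pairwise
        (Function.onFun Commute fun i => (a i)⁻¹) :=
      fun i hi j hj hij => ((hca hi hj hij).inv_left).inv_right
    refine ⟨fun i => (a i)⁻¹, fun i => inv_mem (ha i), hcinv, ?_⟩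
    have hprod : Finset.univ.noncommProd a hca *
        Finset.univ.noncommProd (fun i => (a i)⁻¹) hcinv = 1 := by
      rw [← Finset.noncommProd_mul_distrib a _ hca hcinv (hpair _ _ hainvL haL)]
      rw [Finset.noncommProd_eq_pow_card _ _ _ 1 (fun i _ => by simp), one_pow]
    exact inv_eq_of_mul_eq_one_right hprod
  let S : Subgroup G :=
    { carrier := setOf P
      one_mem' := hone
      mul_mem' := fun hy hz => hmul _ _ hy hz
      inv_mem' := fun hy => hinv _ hy }
  have hDS : ∀ i, D i ≤ S := by
    intro j y hy
    have hcy : ((Finset.univ : Finset (Fin t)) : Set (Fin t)).Pairwise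
        (Function.onFun Commute fun i => if i = j then y else 1) := by
      intro i _ i' _ hii'
      show Commute (if i = j then y else 1) (if i' = j then y else 1)
      rcases eq_or_ne i j with rfl | hij
      · rw [if_neg (show ¬ i' = i from fun h => hii' h.symm)]
        exact Commute.one_right _
      · rw [if_neg hij]
        exact Commute.one_left _
    refine ⟨fun i => if i = j then y else 1, ?_, hcy, ?_⟩
    · intro i
      rcases eq_or_ne i j with rfl | hij
      · simpa using hy
      · simp only [if_neg hij]
        exact one_mem _
    · rw [← Finset.mul_noncommProd_erase Finset.univ (Finset.mem_univ j) _ hcy]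
      have h1 : (Finset.univ.erase j).noncommProd (fun i => if i = j then y else 1)
          (hcy.mono (Finset.coe_subset.mpr (Finset.erase_subset _ _))) = 1 :=
        (Finset.noncommProd_eq_pow_card _ _ _ 1
          (fun i hi => if_neg (Finset.ne_of_mem_erase hi))).trans (one_pow _)
      exact (mul_one y).symm.trans (congrArg₂ (· * ·) (if_pos rfl).symm h1.symm)
  have hxP : P x := (iSup_le hDS : (⨆ i, D i) ≤ S) hx
  obtain ⟨a, ha, hc, rfl⟩ := hxP
  have haL : ∀ i, a i ∈ L i := fun i => hD i (ha i)
  refine ⟨a, ha, ?_, ?_⟩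
  · intro i
    rw [← Finset.mul_noncommProd_erase Finset.univ (Finset.mem_univ i) a hc, ← mul_assoc,
      inv_mul_cancel, one_mul]
    refine Subgroup.noncommProd_mem _ _ ?_
    intro j hj
    exact le_iSup₂ (f := fun j (_ : j ≠ i) => L j) j (Finset.ne_of_mem_erase hj) (haL j)
  · intro E hE
    exact Subgroup.noncommProd_mem _ _ fun i _ => le_iSup E i (hE i)

end stmt6aux

theorem stmt_6 {G : Type*} [Group G] [Finite G] (N K : Subgroup G) [N.Normal]
    (hG : N ⊔ K = ⊤) (hNK : ¬ N ≤ K)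
    (t : ℕ) (ht : 0 < t) (L : Fin t → Subgroup G)
    (hsup : (⨆ i, L i) = N)
    (hindep : ∀ i : Fin t, L i ⊓ (⨆ j : Fin t, ⨆ _ : j ≠ i, L j) = ⊥)
    (hcommute : ∀ i j : Fin t, i ≠ j → ∀ x ∈ L i, ∀ y ∈ L j, x * y = y * x)
    (hsimple : ∀ i, IsSimpleGroup ↥(L i))
    (hnonab : ∀ i, ∃ a b : ↥(L i), a * b ≠ b * a)
    (hperm : ∀ k ∈ K, ∀ i : Fin t, ∃ j : Fin t,
        (L i).map (MulAut.conj k).toMonoidHom = L j)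
    (htrans : ∀ i j : Fin t, ∃ k ∈ K,
        (L i).map (MulAut.conj k).toMonoidHom = L j)
    (hK1 : L ⟨0, ht⟩ ⊓ K ≠ ⊥) :
    Set.BijOn (fun T : Subgroup G => L ⟨0, ht⟩ ⊓ T)
      {T : Subgroup G |
        (T < N ∧ N ⊓ K ≤ T ∧ ∀ k ∈ K, ∀ x ∈ T, k * x * k⁻¹ ∈ T) ∧
        ∀ T' : Subgroup G,
          (T' < N ∧ N ⊓ K ≤ T' ∧ ∀ k ∈ K, ∀ x ∈ T', k * x * k⁻¹ ∈ T') →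
          T ≤ T' → T' = T}
      {M : Subgroup G |
        (M < L ⟨0, ht⟩ ∧ L ⟨0, ht⟩ ⊓ K ≤ M ∧
          ∀ k ∈ K, (L ⟨0, ht⟩).map (MulAut.conj k).toMonoidHom = L ⟨0, ht⟩ →
            ∀ x ∈ M, k * x * k⁻¹ ∈ M) ∧
        ∀ M' : Subgroup G,
          (M' < L ⟨0, ht⟩ ∧ L ⟨0, ht⟩ ⊓ K ≤ M' ∧
            ∀ k ∈ K, (L ⟨0, ht⟩).map (MulAut.conj k).toMonoidHom = L ⟨0, ht⟩ →
              ∀ x ∈ M', k * x * k⁻¹ ∈ M') →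
          M ≤ M' → M' = M} := by
  classical
  set e1 : Fin t := ⟨0, ht⟩ with he1
  -- basic facts
  have hLle : ∀ i, L i ≤ N := fun i => le_trans (le_iSup L i) (le_of_eq hsup)
  have hLC : ∀ (i j : Fin t), j ≠ i → L j ≤ ⨆ j', ⨆ _ : j' ≠ i, L j' :=
    fun i j h => le_iSup₂ (f := fun j' (_ : j' ≠ i) => L j') j h
  have hcentC : ∀ i, ∀ u ∈ (⨆ j, ⨆ _ : j ≠ i, L j), ∀ v ∈ L i, u * v = v * u := by
    intro i u hu v hv
    have hle : (⨆ j, ⨆ _ : j ≠ i, L j) ≤ Subgroup.centralizer (L i) := by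
      refine iSup₂_le ?_
      intro j hj x hx
      rw [Subgroup.mem_centralizer_iff]
      intro g hg
      exact hcommute i j (Ne.symm hj) g hg x hx
    exact (Subgroup.mem_centralizer_iff.mp (hle hu) v hv).symm
  have hLbot : ∀ i, L i ≠ ⊥ := by
    intro i hbot
    obtain ⟨a, b, hab⟩ := hnonab i
    have h1 : ∀ x : ↥(L i), (x : G) = 1 := by
      intro x
      have h2 : (x : G) ∈ (⊥ : Subgroup G) := by rw [← hbot]; exact x.2
      exact Subgroup.mem_bot.mp h2
    exact hab (Subtype.ext (by rw [Subgroup.coe_mul, Subgroup.coe_mul, h1 a, h1 b]))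
  have hLinj : Function.Injective L := by
    intro i j hij
    by_contra hne
    refine hLbot i (le_bot_iff.mp ?_)
    rw [← hindep i]
    exact le_inf le_rfl (hij ▸ hLC i j (fun h => hne h.symm))
  have comp_uniq : ∀ (i : Fin t) (x a b : G), a ∈ L i →
      a⁻¹ * x ∈ (⨆ j, ⨆ _ : j ≠ i, L j) → b ∈ L i →
      b⁻¹ * x ∈ (⨆ j, ⨆ _ : j ≠ i, L j) → a = b := by
    intro i x a b haL haC hbL hbC
    have hmem : b⁻¹ * a ∈ L i ⊓ (⨆ j, ⨆ _ : j ≠ i, L j) := by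
      rw [Subgroup.mem_inf]
      refine ⟨mul_mem (inv_mem hbL) haL, ?_⟩
      have := mul_mem hbC (inv_mem haC)
      rwa [show b⁻¹ * x * (a⁻¹ * x)⁻¹ = b⁻¹ * a by group] at this
    rw [hindep i, Subgroup.mem_bot] at hmem
    have := congrArg (fun z => b * z) hmem
    simpa [← mul_assoc] using this
  have hU2 : ∀ (D : Fin t → Subgroup G), (∀ i, D i ≤ L i) → ∀ j, L j ⊓ (⨆ i, D i) = D j := by
    intro D hD j
    refine le_antisymm ?_ (le_inf (hD j) (le_iSup D j))
    rintro x ⟨hxL, hxS⟩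
    obtain ⟨a, ha, hcomp, -⟩ := decomp_main L hcommute D hD hxS
    have hx1 : x⁻¹ * x ∈ (⨆ j', ⨆ _ : j' ≠ j, L j') := by
      rw [inv_mul_cancel]; exact one_mem _
    have : a j = x := comp_uniq j x (a j) x (hD j (ha j)) (hcomp j) hxL hx1
    exact this ▸ ha j
  have hinvmap : ∀ T : Subgroup G, (∀ k ∈ K, ∀ x ∈ T, k * x * k⁻¹ ∈ T) →
      ∀ k ∈ K, T.map (MulAut.conj k).toMonoidHom = T := by
    intro T hT k hk
    apply le_antisymm
    · intro x hx
      have hx' := (conj_mem_map_iff k x T).mp hx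
      have := hT k hk _ hx'
      rwa [show k * (k⁻¹ * x * k) * k⁻¹ = x by group] at this
    · intro x hx
      rw [conj_mem_map_iff]
      have := hT k⁻¹ (inv_mem hk) x hx
      rwa [inv_inv] at this
  have hNconj : ∀ (g x : G), x ∈ N → g * x * g⁻¹ ∈ N :=
    fun g x hx => (inferInstance : N.Normal).conj_mem x hx g
  have hNmap : ∀ g : G, N.map (MulAut.conj g).toMonoidHom = N := by
    intro g
    ext x
    rw [conj_mem_map_iff]
    constructor
    · intro h
      have := hNconj g _ h
      rwa [show g * (g⁻¹ * x * g) * g⁻¹ = x by group] at this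
    · intro h
      have := hNconj g⁻¹ _ h
      rwa [inv_inv] at this
  have hKmap : ∀ k ∈ K, K.map (MulAut.conj k).toMonoidHom = K := by
    intro k hk
    apply le_antisymm
    · intro x hx
      have hx' := (conj_mem_map_iff k x K).mp hx
      have := mul_mem (mul_mem hk hx') (inv_mem hk)
      rwa [show k * (k⁻¹ * x * k) * k⁻¹ = x by group] at this
    · intro x hx
      rw [conj_mem_map_iff]
      exact mul_mem (mul_mem (inv_mem hk) hx) hk
  have hLnormN : ∀ i, ∀ n ∈ N, ∀ x ∈ L i, n * x * n⁻¹ ∈ L i := by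
    intro i n hn
    have hnorm : N ≤ Subgroup.normalizer (L i : Set G) := by
      rw [← hsup]
      refine iSup_le ?_
      intro j
      rcases eq_or_ne j i with rfl | hji
      · exact Subgroup.le_normalizer
      · intro x hx
        rw [Subgroup.mem_normalizer_iff]
        intro h
        constructor
        · intro hh
          rwa [hcommute j i hji x hx h hh, mul_assoc, mul_inv_cancel, mul_one]
        · intro hh
          have hc := hcommute j i hji x hx _ hh
          have h3 : x * (x * h * x⁻¹) = x * h := by rw [hc]; group
          exact (mul_left_cancel h3) ▸ hh
    exact fun x hx => (Subgroup.mem_normalizer_iff.mp (hnorm hn) x).mp hx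
  have hLmapN : ∀ i, ∀ n ∈ N, (L i).map (MulAut.conj n).toMonoidHom = L i := by
    intro i n hn
    apply le_antisymm
    · intro x hx
      have hx' := (conj_mem_map_iff n x (L i)).mp hx
      have := hLnormN i n hn _ hx'
      rwa [show n * (n⁻¹ * x * n) * n⁻¹ = x by group] at this
    · intro x hx
      rw [conj_mem_map_iff]
      have := hLnormN i n⁻¹ (inv_mem hn) x hx
      rwa [inv_inv] at this
  have hsigma : ∀ k ∈ K, ∃ σ : Fin t → Fin t, Function.Bijective σ ∧
      ∀ i, (L i).map (MulAut.conj k).toMonoidHom = L (σ i) := by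
    intro k hk
    choose σ hσ using hperm k hk
    have hinj : Function.Injective σ := by
      intro i j hij
      apply hLinj
      apply map_conj_cancel k
      rw [hσ i, hσ j, hij]
    exact ⟨σ, Finite.injective_iff_bijective.mp hinj, hσ⟩
  -- well-definedness of conjugates of H-invariant subgroups
  have WD : ∀ M : Subgroup G, M ≤ L e1 →
      (∀ k ∈ K, (L e1).map (MulAut.conj k).toMonoidHom = L e1 → ∀ x ∈ M, k * x * k⁻¹ ∈ M) →
      ∀ k ∈ K, ∀ k' ∈ K,
        (L e1).map (MulAut.conj k).toMonoidHom = (L e1).map (MulAut.conj k').toMonoidHom →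
        M.map (MulAut.conj k).toMonoidHom = M.map (MulAut.conj k').toMonoidHom := by
    intro M hML hMinv k hk k' hk' hLkk'
    have hh : k'⁻¹ * k ∈ K := mul_mem (inv_mem hk') hk
    have hL : (L e1).map (MulAut.conj (k'⁻¹ * k)).toMonoidHom = L e1 := by
      rw [← map_conj_mul, hLkk', map_conj_mul, inv_mul_cancel, map_conj_one]
    have hL2 : (L e1).map (MulAut.conj (k'⁻¹ * k)⁻¹).toMonoidHom = L e1 := by
      have := congrArg (Subgroup.map (MulAut.conj (k'⁻¹ * k)⁻¹).toMonoidHom) hL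
      rw [map_conj_mul, inv_mul_cancel, map_conj_one] at this
      exact this.symm
    have hMM : M.map (MulAut.conj (k'⁻¹ * k)).toMonoidHom = M := by
      apply le_antisymm
      · intro x hx
        have hx' := (conj_mem_map_iff _ x M).mp hx
        have := hMinv _ hh hL _ hx'
        rwa [show (k'⁻¹*k) * ((k'⁻¹*k)⁻¹ * x * (k'⁻¹*k)) * (k'⁻¹*k)⁻¹ = x by group] at this
      · intro x hx
        rw [conj_mem_map_iff]
        have := hMinv _ (inv_mem hh) hL2 x hx
        rwa [inv_inv] at this
    calc M.map (MulAut.conj k).toMonoidHom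
        = (M.map (MulAut.conj (k'⁻¹ * k)).toMonoidHom).map (MulAut.conj k').toMonoidHom := by
          rw [map_conj_mul, show k' * (k'⁻¹ * k) = k by group]
      _ = M.map (MulAut.conj k').toMonoidHom := by rw [hMM]
  obtain ⟨kc, hkcK, hkcL⟩ : ∃ kc : Fin t → G, (∀ i, kc i ∈ K) ∧
      ∀ i, (L e1).map (MulAut.conj (kc i)).toMonoidHom = L i := by
    choose kc h1 h2 using fun i => htrans e1 i
    exact ⟨kc, h1, h2⟩
  -- a component normalizes any subgroup of `L i` that its source normalizes
  have hnormcomp : ∀ (x : G) (i : Fin t) (a : G), a ∈ L i →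
      a⁻¹ * x ∈ (⨆ j, ⨆ _ : j ≠ i, L j) → ∀ (A : Subgroup G), A ≤ L i →
      (∀ h ∈ A, x * h * x⁻¹ ∈ A) → (∀ h ∈ A, x⁻¹ * h * x ∈ A) →
      a ∈ Subgroup.normalizer (A : Set G) := by
    intro x i a haL haC A hAL hfwd hbwd
    rw [Subgroup.mem_normalizer_iff]
    intro h
    have hxa : x = a * (a⁻¹ * x) := by group
    constructor
    · intro hh
      have hkey : a * h * a⁻¹ = x * h * x⁻¹ := by
        have hc : (a⁻¹ * x) * h = h * (a⁻¹ * x) := hcentC i _ haC h (hAL hh)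
        calc a * h * a⁻¹ = a * ((a⁻¹ * x) * h * (a⁻¹ * x)⁻¹) * a⁻¹ := by
              rw [show (a⁻¹ * x) * h * (a⁻¹ * x)⁻¹ = h * (a⁻¹ * x) * (a⁻¹ * x)⁻¹ by rw [hc],
                mul_assoc _ (a⁻¹ * x), mul_inv_cancel, mul_one]
          _ = x * h * x⁻¹ := by rw [hxa]; group
      rw [hkey]
      exact hfwd h hh
    · intro hh
      have hgL : a * h * a⁻¹ ∈ L i := hAL hh
      have huL : a⁻¹ * (a * h * a⁻¹) * a ∈ L i :=
        mul_mem (mul_mem (inv_mem haL) hgL) haL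
      have hc : (a⁻¹ * x) * (a⁻¹ * (a * h * a⁻¹) * a)
          = (a⁻¹ * (a * h * a⁻¹) * a) * (a⁻¹ * x) := hcentC i _ haC _ huL
      have hkey : x⁻¹ * (a * h * a⁻¹) * x = a⁻¹ * (a * h * a⁻¹) * a := by
        have expand : x⁻¹ * (a * h * a⁻¹) * x
            = (a⁻¹ * x)⁻¹ * ((a⁻¹ * (a * h * a⁻¹) * a) * (a⁻¹ * x)) := by group
        rw [expand, ← hc]
        group
      have hr := hbwd _ hh
      rw [hkey] at hr
      rwa [show a⁻¹ * (a * h * a⁻¹) * a = h by group] at hr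
  -- bundle of facts for conjugates of an `N_K(L1)`-invariant subgroup of `L1`
  have hMi : ∀ M : Subgroup G, M ≤ L e1 →
      (∀ k ∈ K, (L e1).map (MulAut.conj k).toMonoidHom = L e1 → ∀ x ∈ M, k * x * k⁻¹ ∈ M) →
      (M.map (MulAut.conj (kc e1)).toMonoidHom = M) ∧
      (∀ i, M.map (MulAut.conj (kc i)).toMonoidHom ≤ L i) ∧
      (∀ k ∈ K, ∀ i, ∃ j, (M.map (MulAut.conj (kc i)).toMonoidHom).map
          (MulAut.conj k).toMonoidHom = M.map (MulAut.conj (kc j)).toMonoidHom) := by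
    intro M hML hMinv
    refine ⟨?_, ?_, ?_⟩
    · have h1 : M.map (MulAut.conj (kc e1)).toMonoidHom
          = M.map (MulAut.conj (1:G)).toMonoidHom := by
        apply WD M hML hMinv _ (hkcK e1) _ (one_mem K)
        rw [map_conj_one, hkcL e1]
      rw [h1, map_conj_one]
    · intro i
      calc M.map (MulAut.conj (kc i)).toMonoidHom
          ≤ (L e1).map (MulAut.conj (kc i)).toMonoidHom := Subgroup.map_mono hML
        _ = L i := hkcL i
    · intro k hk i
      obtain ⟨σ, hσbij, hσ⟩ := hsigma k hk
      refine ⟨σ i, ?_⟩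
      rw [map_conj_mul]
      apply WD M hML hMinv _ (mul_mem hk (hkcK i)) _ (hkcK (σ i))
      rw [← map_conj_mul, hkcL i, hσ i, hkcL (σ i)]
  -- the join of conjugates is K-invariant
  have hiSupinv : ∀ M : Subgroup G, M ≤ L e1 →
      (∀ k ∈ K, (L e1).map (MulAut.conj k).toMonoidHom = L e1 → ∀ x ∈ M, k * x * k⁻¹ ∈ M) →
      ∀ k ∈ K, ∀ x ∈ (⨆ i, M.map (MulAut.conj (kc i)).toMonoidHom),
        k * x * k⁻¹ ∈ (⨆ i, M.map (MulAut.conj (kc i)).toMonoidHom) := by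
    intro M hML hMinv k hk x hx
    obtain ⟨-, -, hmove⟩ := hMi M hML hMinv
    have h1 : k * x * k⁻¹ ∈ (⨆ i, M.map (MulAut.conj (kc i)).toMonoidHom).map
        (MulAut.conj k).toMonoidHom := mem_map_conj_of_mem k x _ hx
    rw [Subgroup.map_iSup] at h1
    refine (iSup_le ?_ : _ ≤ (⨆ i, M.map (MulAut.conj (kc i)).toMonoidHom)) h1
    intro i
    obtain ⟨j, hj⟩ := hmove k hk i
    rw [hj]
    exact le_iSup (fun i => M.map (MulAut.conj (kc i)).toMonoidHom) j
  -- a proper `L1`-normalized subgroup of `L1` containing `K1` is impossible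
  have hnormal_bot : ∀ M : Subgroup G, M ≤ L e1 → L e1 ≤ Subgroup.normalizer (M : Set G) →
      L e1 ⊓ K ≤ M → M ≠ L e1 → False := by
    intro M hML hnorm hK1M hne
    have hnormal : (M.subgroupOf (L e1)).Normal := by
      constructor
      intro m hm g
      rw [Subgroup.mem_subgroupOf] at hm ⊢
      rw [Subgroup.coe_mul, Subgroup.coe_mul]
      exact ((Subgroup.mem_normalizer_iff.mp (hnorm g.2)) (m : G)).mp hm
    rcases (hsimple e1).eq_bot_or_eq_top_of_normal _ hnormal with hbot | htop
    · rw [Subgroup.subgroupOf_eq_bot] at hbot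
      have hMbot : M = ⊥ := by
        rw [← inf_eq_left.mpr hML]
        exact disjoint_iff.mp hbot
      exact hK1 (le_bot_iff.mp (hMbot ▸ hK1M))
    · rw [Subgroup.subgroupOf_eq_top] at htop
      exact hne (le_antisymm hML htop)
  -- a proper K-invariant subgroup of N cannot contain L1
  have hproper : ∀ T : Subgroup G, (∀ k ∈ K, ∀ x ∈ T, k * x * k⁻¹ ∈ T) →
      T < N → ¬ (L e1 ≤ T) := by
    intro T hTinv hTN hle
    refine hTN.2 ?_
    rw [← hsup]
    refine iSup_le fun i => ?_
    calc L i = (L e1).map (MulAut.conj (kc i)).toMonoidHom := (hkcL i).symm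
      _ ≤ T.map (MulAut.conj (kc i)).toMonoidHom := Subgroup.map_mono hle
      _ = T := hinvmap T hTinv _ (hkcK i)
  -- L1 ⊓ T is a proper subgroup of L1 for T in the domain
  have hL1T : ∀ T : Subgroup G, (∀ k ∈ K, ∀ x ∈ T, k * x * k⁻¹ ∈ T) →
      T < N → L e1 ⊓ T < L e1 := by
    intro T hTinv hTN
    refine lt_of_le_of_ne inf_le_left fun h => ?_
    exact hproper T hTinv hTN (by rw [← h]; exact inf_le_right)
  -- L1 ⊓ T is N_K(L1)-invariant
  have hMofTinv : ∀ T : Subgroup G, (∀ k ∈ K, ∀ x ∈ T, k * x * k⁻¹ ∈ T) →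
      ∀ k ∈ K, (L e1).map (MulAut.conj k).toMonoidHom = L e1 →
      ∀ x ∈ L e1 ⊓ T, k * x * k⁻¹ ∈ L e1 ⊓ T := by
    intro T hTinv k hk hkL x hx
    rw [Subgroup.mem_inf] at hx ⊢
    exact ⟨by rw [← hkL]; exact mem_map_conj_of_mem k x _ hx.1, hTinv k hk x hx.2⟩
  -- conjugates of L1 ⊓ T
  have hMiT : ∀ T : Subgroup G, (∀ k ∈ K, ∀ x ∈ T, k * x * k⁻¹ ∈ T) →
      ∀ i, (L e1 ⊓ T).map (MulAut.conj (kc i)).toMonoidHom = L i ⊓ T := by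
    intro T hTinv i
    rw [map_conj_inf, hkcL i, hinvmap T hTinv _ (hkcK i)]
  -- K1 is contained in L1 ⊓ T when N ⊓ K ≤ T
  have hK1T : ∀ T : Subgroup G, N ⊓ K ≤ T → L e1 ⊓ K ≤ L e1 ⊓ T := by
    intro T hNKT x hx
    rw [Subgroup.mem_inf] at hx ⊢
    exact ⟨hx.1, hNKT (Subgroup.mem_inf.mpr ⟨hLle e1 hx.1, hx.2⟩)⟩
  -- KEY LEMMA: a maximal element of the domain is the join of its intersections
  have hKL : ∀ T : Subgroup G,
      (T < N ∧ N ⊓ K ≤ T ∧ ∀ k ∈ K, ∀ x ∈ T, k * x * k⁻¹ ∈ T) →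
      (∀ T' : Subgroup G,
        (T' < N ∧ N ⊓ K ≤ T' ∧ ∀ k ∈ K, ∀ x ∈ T', k * x * k⁻¹ ∈ T') → T ≤ T' → T' = T) →
      T = ⨆ i, (L i ⊓ T) := by
    rintro T ⟨hTN, hNKT, hTinv⟩ hTmax
    set NN : Fin t → Subgroup G := fun i => L i ⊓ Subgroup.normalizer ((L i ⊓ T : Subgroup G) : Set G) with hNNdef
    have hNNL : ∀ i, NN i ≤ L i := fun i => inf_le_left
    have hTsub : T ≤ ⨆ i, NN i := by
      intro x hx
      have hxN : x ∈ ⨆ i, L i := by rw [hsup]; exact hTN.le hx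
      obtain ⟨a, haL, hacomp, hmem⟩ := decomp_main L hcommute L (fun i => le_rfl) hxN
      refine hmem NN fun i => ⟨haL i, ?_⟩
      refine hnormcomp x i (a i) (haL i) (hacomp i) (L i ⊓ T) inf_le_left ?_ ?_
      · intro h hh
        rw [Subgroup.mem_inf] at hh ⊢
        exact ⟨hLnormN i x (hTN.le hx) h hh.1, mul_mem (mul_mem hx hh.2) (inv_mem hx)⟩
      · intro h hh
        rw [Subgroup.mem_inf] at hh ⊢
        constructor
        · have := hLnormN i x⁻¹ (inv_mem (hTN.le hx)) h hh.1
          rwa [inv_inv] at this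
        · exact mul_mem (mul_mem (inv_mem hx) hh.2) hx
    have hNNinv : ∀ k ∈ K, ∀ y ∈ ⨆ i, NN i, k * y * k⁻¹ ∈ ⨆ i, NN i := by
      intro k hk y hy
      obtain ⟨σ, hσbij, hσ⟩ := hsigma k hk
      have h1 : k * y * k⁻¹ ∈ (⨆ i, NN i).map (MulAut.conj k).toMonoidHom :=
        mem_map_conj_of_mem k y _ hy
      rw [Subgroup.map_iSup] at h1
      refine (iSup_le ?_ : _ ≤ ⨆ i, NN i) h1
      intro i
      have hmapNN : (NN i).map (MulAut.conj k).toMonoidHom = NN (σ i) := by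
        show (L i ⊓ Subgroup.normalizer ((L i ⊓ T : Subgroup G) : Set G)).map (MulAut.conj k).toMonoidHom
          = L (σ i) ⊓ Subgroup.normalizer ((L (σ i) ⊓ T : Subgroup G) : Set G)
        rw [map_conj_inf, hσ i, Subgroup.map_equiv_normalizer_eq (L i ⊓ T) (MulAut.conj k),
          map_conj_inf, hσ i, hinvmap T hTinv k hk]
      rw [hmapNN]
      exact le_iSup NN (σ i)
    have hNNle : (⨆ i, NN i) ≤ N := iSup_le fun i => (hNNL i).trans (hLle i)
    have hNNlt : (⨆ i, NN i) < N := by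
      refine lt_of_le_of_ne hNNle fun hEq => ?_
      have h3 : L e1 = NN e1 := by
        rw [← hU2 NN hNNL e1, hEq]
        exact (inf_eq_left.mpr (hLle e1)).symm
      have h4 : L e1 ≤ Subgroup.normalizer ((L e1 ⊓ T : Subgroup G) : Set G) := (le_of_eq h3).trans inf_le_right
      exact hnormal_bot (L e1 ⊓ T) inf_le_left h4 (hK1T T hNKT) (hL1T T hTinv hTN).ne
    have hEqNN : (⨆ i, NN i) = T := hTmax _ ⟨hNNlt, hNKT.trans hTsub, hNNinv⟩ hTsub
    have hNNi : ∀ i, L i ⊓ T = NN i := by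
      intro i
      conv_lhs => rw [← hEqNN]
      exact hU2 NN hNNL i
    refine le_antisymm ?_ (iSup_le fun i => inf_le_right)
    calc T = ⨆ i, NN i := hEqNN.symm
      _ ≤ ⨆ i, (L i ⊓ T) := iSup_mono fun i => le_of_eq (hNNi i).symm
  -- now the bijection
  refine ⟨?_, ?_, ?_⟩
  · -- MapsTo
    rintro T ⟨⟨hTN, hNKT, hTinv⟩, hTmax⟩
    simp only [Set.mem_setOf_eq]
    refine ⟨⟨hL1T T hTinv hTN, hK1T T hNKT, hMofTinv T hTinv⟩, ?_⟩
    rintro M' ⟨hM'lt, hM'K1, hM'inv⟩ hMM'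
    have hT : T = ⨆ i, (L i ⊓ T) := hKL T ⟨hTN, hNKT, hTinv⟩ hTmax
    obtain ⟨hM'1, hM'iL, -⟩ := hMi M' hM'lt.le hM'inv
    have hTT' : T ≤ ⨆ i, M'.map (MulAut.conj (kc i)).toMonoidHom := by
      conv_lhs => rw [hT]
      refine iSup_mono fun i => ?_
      rw [← hMiT T hTinv i]
      exact Subgroup.map_mono hMM'
    have hT'N : (⨆ i, M'.map (MulAut.conj (kc i)).toMonoidHom) ≤ N :=
      iSup_le fun i => (hM'iL i).trans (hLle i)
    have hT'lt : (⨆ i, M'.map (MulAut.conj (kc i)).toMonoidHom) < N := by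
      refine lt_of_le_of_ne hT'N fun hEq => ?_
      have h2 : L e1 = M'.map (MulAut.conj (kc e1)).toMonoidHom := by
        rw [← hU2 _ hM'iL e1, hEq]
        exact (inf_eq_left.mpr (hLle e1)).symm
      rw [hM'1] at h2
      exact hM'lt.ne' h2
    have hT'T : (⨆ i, M'.map (MulAut.conj (kc i)).toMonoidHom) = T :=
      hTmax _ ⟨hT'lt, hNKT.trans hTT', hiSupinv M' hM'lt.le hM'inv⟩ hTT'
    calc M' = M'.map (MulAut.conj (kc e1)).toMonoidHom := hM'1.symm
      _ = L e1 ⊓ ⨆ i, M'.map (MulAut.conj (kc i)).toMonoidHom := (hU2 _ hM'iL e1).symm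
      _ = L e1 ⊓ T := by rw [hT'T]
  · -- InjOn
    rintro T1 ⟨⟨hT1N, hNKT1, hT1inv⟩, hT1max⟩ T2 ⟨⟨hT2N, hNKT2, hT2inv⟩, hT2max⟩ heq
    have heq' : L e1 ⊓ T1 = L e1 ⊓ T2 := heq
    rw [hKL T1 ⟨hT1N, hNKT1, hT1inv⟩ hT1max, hKL T2 ⟨hT2N, hNKT2, hT2inv⟩ hT2max]
    refine iSup_congr fun i => ?_
    rw [← hMiT T1 hT1inv i, ← hMiT T2 hT2inv i, heq']
  · -- SurjOn
    rintro M ⟨⟨hMlt, hMK1, hMinvc⟩, hMmax⟩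
    obtain ⟨hM1, hMiL, hmove⟩ := hMi M hMlt.le hMinvc
    set T0 : Subgroup G :=
      (⨆ i, M.map (MulAut.conj (kc i)).toMonoidHom) ⊔ (N ⊓ K) with hT0def
    have hT0N : T0 ≤ N := sup_le (iSup_le fun i => (hMiL i).trans (hLle i)) inf_le_left
    have hNKT0 : N ⊓ K ≤ T0 := le_sup_right
    have hT0inv : ∀ k ∈ K, ∀ x ∈ T0, k * x * k⁻¹ ∈ T0 := by
      intro k hk x hx
      have h1 : k * x * k⁻¹ ∈ T0.map (MulAut.conj k).toMonoidHom :=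
        mem_map_conj_of_mem k x _ hx
      rw [hT0def, Subgroup.map_sup] at h1
      refine (sup_le ?_ ?_ : _ ≤ T0) h1
      · rw [Subgroup.map_iSup]
        refine le_trans (iSup_le fun i => ?_) le_sup_left
        obtain ⟨j, hj⟩ := hmove k hk i
        rw [hj]
        exact le_iSup (fun i => M.map (MulAut.conj (kc i)).toMonoidHom) j
      · rw [map_conj_inf, hNmap k, hKmap k hk]
        exact le_sup_right
    have hT0lt : T0 < N := by
      refine lt_of_le_of_ne hT0N fun hEq => ?_
      set NN : Fin t → Subgroup G :=
        fun i => L i ⊓ Subgroup.normalizer ((M.map (MulAut.conj (kc i)).toMonoidHom : Subgroup G) : Set G) with hNN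
      have hNNL : ∀ i, NN i ≤ L i := fun i => inf_le_left
      have hsub1 : (⨆ i, M.map (MulAut.conj (kc i)).toMonoidHom) ≤ ⨆ i, NN i :=
        iSup_mono fun i => le_inf (hMiL i) Subgroup.le_normalizer
      have hsub2 : N ⊓ K ≤ ⨆ i, NN i := by
        intro c hc
        obtain ⟨hcN, hcK⟩ := Subgroup.mem_inf.mp hc
        obtain ⟨a, haL, hacomp, hmem⟩ := decomp_main L hcommute L (fun i => le_rfl)
          (by rw [hsup]; exact hcN)
        refine hmem NN fun i => ⟨haL i, ?_⟩
        have hcMi : (M.map (MulAut.conj (kc i)).toMonoidHom).map (MulAut.conj c).toMonoidHom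
            = M.map (MulAut.conj (kc i)).toMonoidHom := by
          rw [map_conj_mul]
          apply WD M hMlt.le hMinvc _ (mul_mem hcK (hkcK i)) _ (hkcK i)
          rw [← map_conj_mul, hkcL i, hLmapN i c hcN]
        refine hnormcomp c i (a i) (haL i) (hacomp i) _ (hMiL i) ?_ ?_
        · intro h hh
          rw [← hcMi]
          exact mem_map_conj_of_mem c h _ hh
        · intro h hh
          have := (conj_mem_map_iff c h (M.map (MulAut.conj (kc i)).toMonoidHom)).mp
            (by rw [hcMi]; exact hh)
          exact this
      have hNle : N ≤ ⨆ i, NN i := by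
        rw [← hEq, hT0def]
        exact sup_le hsub1 hsub2
      have h2 : L e1 = NN e1 := by
        rw [← hU2 NN hNNL e1]
        exact (inf_eq_left.mpr ((hLle e1).trans hNle)).symm
      have h4 : L e1 ≤ Subgroup.normalizer ((M.map (MulAut.conj (kc e1)).toMonoidHom : Subgroup G) : Set G) :=
        (le_of_eq h2).trans inf_le_right
      rw [hM1] at h4
      exact hnormal_bot M hMlt.le h4 hMK1 hMlt.ne
    have hFin : Finite (Subgroup G) :=
      Finite.of_injective (fun H : Subgroup G => (H : Set G)) SetLike.coe_injective
    set S : Set (Subgroup G) :=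
      {T | T0 ≤ T ∧ T < N ∧ N ⊓ K ≤ T ∧ ∀ k ∈ K, ∀ x ∈ T, k * x * k⁻¹ ∈ T} with hS
    have hSne : T0 ∈ S := ⟨le_rfl, hT0lt, hNKT0, hT0inv⟩
    obtain ⟨T, hTS, hTmaxS⟩ : ∃ T ∈ S, ∀ T' ∈ S, id T ≤ id T' → id T = id T' := by
      obtain ⟨T, hTS, hm⟩ := Set.Finite.exists_maximalFor id S (Set.toFinite S) ⟨T0, hSne⟩
      exact ⟨T, hTS, fun T' hT' hle => le_antisymm hle (hm hT' hle)⟩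
    obtain ⟨hT0T, hTN, hNKT, hTinv⟩ := hTS
    have hTmax : ∀ T' : Subgroup G,
        (T' < N ∧ N ⊓ K ≤ T' ∧ ∀ k ∈ K, ∀ x ∈ T', k * x * k⁻¹ ∈ T') → T ≤ T' → T' = T := by
      intro T' hc' hle
      exact (hTmaxS T' ⟨hT0T.trans hle, hc'.1, hc'.2.1, hc'.2.2⟩ hle).symm
    refine ⟨T, ⟨⟨hTN, hNKT, hTinv⟩, hTmax⟩, ?_⟩
    have hMle : M ≤ L e1 ⊓ T := by
      refine le_inf hMlt.le ?_
      calc M = M.map (MulAut.conj (kc e1)).toMonoidHom := hM1.symm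
        _ ≤ ⨆ i, M.map (MulAut.conj (kc i)).toMonoidHom :=
            le_iSup (fun i => M.map (MulAut.conj (kc i)).toMonoidHom) e1
        _ ≤ T0 := le_sup_left
        _ ≤ T := hT0T
    exact hMmax (L e1 ⊓ T) ⟨hL1T T hTinv hTN, hK1T T hNKT, hMofTinv T hTinv⟩ hMle
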